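/- If for each i ∈ [n], X_i is uniformly distributed on [0, i] (no independence assumed) and n ≥ 4, then E[max{|A| : A ⊆ [n], ∑_{i∈A} X_i ≤ 1}] ≤ √(2 H_n), where H_n = ∑_{i=1}^n 1/i is the n-th harmonic number. -/

import Mathlib

open MeasureTheory Set
open scoped ENNReal

/-- The Bruss-Robertson maximal function. -/
noncomputable def knapMax {n : ℕ} (x : Fin n → ℝ) (s : ℝ) : ℕ :=
  (Finset.univ.powerset.filter (fun A => ∑ i ∈ A, x i ≤ s)).sup Finset.card

lemma knap_le_iff {n : ℕ} (x : Fin n → ℝ) (m : ℕ) :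
    m ≤ knapMax x 1 ↔ ∃ A : Finset (Fin n), (∑ i ∈ A, x i ≤ 1) ∧ m ≤ A.card := by
  rcases Nat.eq_zero_or_pos m with rfl | hm
  · exact ⟨fun _ => ⟨∅, by simp, Nat.zero_le _⟩, fun _ => Nat.zero_le _⟩
  · rw [knapMax, Finset.le_sup_iff hm]
    constructor
    · rintro ⟨A, hA, h⟩
      simp only [Finset.mem_filter, Finset.mem_powerset] at hA
      exact ⟨A, hA.2, h⟩
    · rintro ⟨A, h1, h2⟩
      exact ⟨A, by simp [h1], h2⟩

lemma knap_exists {n : ℕ} (x : Fin n → ℝ) :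
    ∃ A : Finset (Fin n), (∑ i ∈ A, x i ≤ 1) ∧ A.card = knapMax x 1 := by
  obtain ⟨A, hA, h⟩ := Finset.exists_mem_eq_sup
    (Finset.univ.powerset.filter (fun A : Finset (Fin n) => ∑ i ∈ A, x i ≤ 1))
    ⟨∅, by simp⟩ Finset.card
  simp only [Finset.mem_filter] at hA
  exact ⟨A, hA.2, h.symm⟩

lemma measurable_knap {n : ℕ} : Measurable (fun x : Fin n → ℝ => knapMax x 1) := by
  have key : ∀ m : ℕ, MeasurableSet {x : Fin n → ℝ | m ≤ knapMax x 1} := by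
    intro m
    have : {x : Fin n → ℝ | m ≤ knapMax x 1}
        = ⋃ A : Finset (Fin n), ⋃ (_ : m ≤ A.card), {x : Fin n → ℝ | ∑ i ∈ A, x i ≤ 1} := by
      ext x
      simp only [mem_setOf_eq, mem_iUnion, knap_le_iff]
      exact ⟨fun ⟨A, h1, h2⟩ => ⟨A, h2, h1⟩, fun ⟨A, h2, h1⟩ => ⟨A, h1, h2⟩⟩
    rw [this]
    refine MeasurableSet.iUnion fun A => MeasurableSet.iUnion fun _ => ?_
    exact measurableSet_le (Finset.measurable_sum _ fun i _ => measurable_pi_apply i)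
      measurable_const
  apply measurable_to_countable'
  intro m
  have : (fun x : Fin n → ℝ => knapMax x 1) ⁻¹' {m}
      = {x : Fin n → ℝ | m ≤ knapMax x 1} \ {x : Fin n → ℝ | m + 1 ≤ knapMax x 1} := by
    ext x
    simp only [mem_preimage, mem_singleton_iff, mem_diff, mem_setOf_eq]
    omega
  rw [this]
  exact (key m).diff (key (m+1))

lemma knap_pointwise {n : ℕ} (τ : ℝ) (hτ : 0 < τ) (x : Fin n → ℝ) :
    τ * (knapMax x 1 : ℝ) ≤ τ * ((Finset.univ.filter (fun i => x i ≤ τ)).card : ℝ)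
      + 1 - ∑ i ∈ Finset.univ.filter (fun i => x i ≤ τ), x i := by
  obtain ⟨A, hA, hcard⟩ := knap_exists x
  set T := Finset.univ.filter (fun i : Fin n => x i ≤ τ) with hT
  have h1 : ((A \ T).card : ℝ) * τ ≤ ∑ i ∈ A \ T, x i := by
    have := Finset.card_nsmul_le_sum (A \ T) x τ (fun i hi => ?_)
    · simpa [nsmul_eq_mul] using this
    · have h := (Finset.mem_sdiff.mp hi).2
      simp only [hT, Finset.mem_filter, Finset.mem_univ, true_and] at h
      linarith [not_le.mp h]
  have h2 : ∑ i ∈ T \ A, x i ≤ ((T \ A).card : ℝ) * τ := by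
    have := Finset.sum_le_card_nsmul (T \ A) x τ (fun i hi => ?_)
    · simpa [nsmul_eq_mul] using this
    · have h := (Finset.mem_sdiff.mp hi).1
      simp only [hT, Finset.mem_filter, Finset.mem_univ, true_and] at h
      exact h
  have h3 : ∑ i ∈ A ∩ T, x i + ∑ i ∈ A \ T, x i = ∑ i ∈ A, x i :=
    Finset.sum_inter_add_sum_sdiff A T x
  have h4 : ∑ i ∈ T ∩ A, x i + ∑ i ∈ T \ A, x i = ∑ i ∈ T, x i :=
    Finset.sum_inter_add_sum_sdiff T A x
  have h5 : ((A ∩ T).card : ℝ) + ((A \ T).card : ℝ) = (A.card : ℝ) := by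
    exact_mod_cast congrArg (Nat.cast : ℕ → ℝ) (Finset.card_inter_add_card_sdiff A T)
  have h6 : ((T ∩ A).card : ℝ) + ((T \ A).card : ℝ) = (T.card : ℝ) := by
    exact_mod_cast congrArg (Nat.cast : ℕ → ℝ) (Finset.card_inter_add_card_sdiff T A)
  have h7 : A ∩ T = T ∩ A := Finset.inter_comm A T
  rw [← hcard]
  have e1 : τ * (A.card : ℝ) = τ * ((A ∩ T).card : ℝ) + ((A \ T).card : ℝ) * τ := by
    rw [← h5]; ring
  have e2 : τ * (T.card : ℝ) = τ * ((T ∩ A).card : ℝ) + ((T \ A).card : ℝ) * τ := by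
    rw [← h6]; ring
  have h8 : ∑ i ∈ A ∩ T, x i = ∑ i ∈ T ∩ A, x i := by rw [h7]
  have e3 : τ * ((A ∩ T).card : ℝ) = τ * ((T ∩ A).card : ℝ) := by rw [h7]
  linarith

/-- If `X i` is uniformly distributed on `[0, i]` for `i = 1, …, n` (no independence
assumed) and `n ≥ 4`, then the expected maximal number of values summing to at most `1`
is bounded by `√(2 Hₙ)`, where `Hₙ` is the `n`-th harmonic number. -/
theorem bruss_robertson_multiscale {Ω : Type*} [MeasurableSpace Ω] (μ : Measure Ω)
    [IsProbabilityMeasure μ] (n : ℕ) (hn : 4 ≤ n) (X : Fin n → Ω → ℝ)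
    (hX : ∀ i, Measurable (X i))
    (hlaw : ∀ i : Fin n, μ.map (X i)
      = ((i.1 + 1 : ℝ≥0∞))⁻¹ • volume.restrict (Icc (0:ℝ) (i.1 + 1))) :
    ∫ ω, (knapMax (fun i => X i ω) 1 : ℝ) ∂μ
      ≤ Real.sqrt (2 * ∑ i ∈ Finset.range n, (1 : ℝ) / (i + 1)) := by
  classical
  set H : ℝ := ∑ i ∈ Finset.range n, (1:ℝ)/(i+1) with hHdef
  have hH2 : 2 ≤ H := by
    have hle : ∑ i ∈ Finset.range 4, (1:ℝ)/(i+1) ≤ H := by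
      apply Finset.sum_le_sum_of_subset_of_nonneg (Finset.range_subset_range.mpr hn)
      intro i _ _; positivity
    have h4 : ∑ i ∈ Finset.range 4, (1:ℝ)/(i+1) = 25/12 := by
      norm_num [Finset.sum_range_succ]
    linarith
  have hH0 : 0 < H := by linarith
  set τ : ℝ := Real.sqrt (2/H) with hτdef
  have hτ0 : 0 < τ := Real.sqrt_pos.mpr (by positivity)
  have hτsq : τ^2 = 2/H := Real.sq_sqrt (by positivity)
  have hτ1 : τ ≤ 1 := by
    rw [hτdef, show (1:ℝ) = Real.sqrt 1 by simp]
    exact Real.sqrt_le_sqrt (by rw [div_le_one hH0]; linarith)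
  set f1 : ℝ → ℝ := (Set.Iic τ).indicator (fun _ => 1) with hf1def
  set f2 : ℝ → ℝ := (Set.Iic τ).indicator id with hf2def
  have hf1m : Measurable f1 := measurable_const.indicator measurableSet_Iic
  have hf2m : Measurable f2 := measurable_id.indicator measurableSet_Iic
  -- pushforward formula
  have hmap : ∀ i : Fin n, ∀ g : ℝ → ℝ, Measurable g →
      ∫ ω, g (X i ω) ∂μ = ((i.1:ℝ)+1)⁻¹ * ∫ x in Icc (0:ℝ) (i.1+1), g x := by
    intro i g hg
    rw [← integral_map (hX i).aemeasurable hg.aestronglyMeasurable, hlaw i,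
      integral_smul_measure, smul_eq_mul]
    congr 1
    rw [ENNReal.toReal_inv]
    congr 1
  have hIic : ∀ i : Fin n, Set.Iic τ ∩ Icc (0:ℝ) ((i.1:ℝ)+1) = Icc (0:ℝ) τ := by
    intro i
    have hb : τ ≤ (i.1:ℝ)+1 := le_trans hτ1 (by
      have : (0:ℝ) ≤ (i.1:ℝ) := Nat.cast_nonneg _
      linarith)
    ext x
    simp only [mem_inter_iff, mem_Iic, mem_Icc]
    exact ⟨fun ⟨h1, h2, _⟩ => ⟨h2, h1⟩, fun ⟨h1, h2⟩ => ⟨h2, h1, le_trans h2 hb⟩⟩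
  have E1 : ∀ i : Fin n, ∫ ω, f1 (X i ω) ∂μ = τ / ((i.1:ℝ)+1) := by
    intro i
    rw [hmap i f1 hf1m]
    have h : ∫ x in Icc (0:ℝ) ((i.1:ℝ)+1), f1 x = τ := by
      rw [hf1def, integral_indicator measurableSet_Iic,
        Measure.restrict_restrict measurableSet_Iic, hIic i]
      simp [Real.volume_Icc, ENNReal.toReal_ofReal hτ0.le, hτ0.le]
    rw [h]; ring
  have E2 : ∀ i : Fin n, ∫ ω, f2 (X i ω) ∂μ = τ^2 / (2*((i.1:ℝ)+1)) := by
    intro i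
    rw [hmap i f2 hf2m]
    have h : ∫ x in Icc (0:ℝ) ((i.1:ℝ)+1), f2 x = τ^2/2 := by
      rw [hf2def, integral_indicator measurableSet_Iic,
        Measure.restrict_restrict measurableSet_Iic, hIic i]
      rw [MeasureTheory.integral_Icc_eq_integral_Ioc]
      have : ∫ x in Ioc (0:ℝ) τ, id x = ∫ x in (0:ℝ)..τ, x := by
        rw [intervalIntegral.integral_of_le hτ0.le]; rfl
      rw [this, integral_id]; ring
    have hne : ((i.1:ℝ)+1) ≠ 0 := by positivity
    rw [h]; field_simp
  -- integrability
  have hXint : ∀ i : Fin n, Integrable (X i) μ := by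
    intro i
    have h1 : Integrable id ((((i.1:ℝ≥0∞))+1)⁻¹ • volume.restrict (Icc (0:ℝ) ((i.1:ℝ)+1))) := by
      apply Integrable.smul_measure (continuous_id.integrableOn_Icc : Integrable id (volume.restrict (Icc (0:ℝ) ((i.1:ℝ)+1))))
      simp [ENNReal.inv_ne_top]
    rw [← hlaw i] at h1
    exact (integrable_map_measure measurable_id.aestronglyMeasurable (hX i).aemeasurable).mp h1
  have hi1 : ∀ i : Fin n, Integrable (fun ω => f1 (X i ω)) μ := by
    intro i
    apply Integrable.mono' (integrable_const (1:ℝ))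
      ((hf1m.comp (hX i)).aestronglyMeasurable)
    filter_upwards with ω
    simp only [Function.comp_apply, hf1def, Set.indicator_apply]
    split <;> simp
  have hi2 : ∀ i : Fin n, Integrable (fun ω => f2 (X i ω)) μ := by
    intro i
    apply Integrable.mono' (hXint i).abs
      ((hf2m.comp (hX i)).aestronglyMeasurable)
    filter_upwards with ω
    simp only [Function.comp_apply, hf2def, Set.indicator_apply]
    split <;> simp [Real.norm_eq_abs, abs_nonneg]
  have hkm : Measurable (fun ω => (knapMax (fun i => X i ω) 1 : ℝ)) := by
    have h : (fun ω => (knapMax (fun i => X i ω) 1 : ℝ))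
        = (fun k : ℕ => (k:ℝ)) ∘ (fun x : Fin n → ℝ => knapMax x 1) ∘ (fun ω i => X i ω) := rfl
    rw [h]
    exact (measurable_from_top.comp measurable_knap).comp (measurable_pi_lambda _ fun i => hX i)
  have hkbd : ∀ x : Fin n → ℝ, knapMax x 1 ≤ n := by
    intro x
    apply Finset.sup_le
    intro A _
    exact le_trans (Finset.card_le_univ A) (by simp)
  have hki : Integrable (fun ω => (knapMax (fun i => X i ω) 1 : ℝ)) μ := by
    apply Integrable.mono' (integrable_const (n:ℝ)) hkm.aestronglyMeasurable
    filter_upwards with ω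
    rw [Real.norm_eq_abs, abs_of_nonneg (by positivity)]
    exact_mod_cast hkbd _
  have hs1 : Integrable (fun ω => ∑ i, f1 (X i ω)) μ :=
    integrable_finset_sum _ (fun i _ => hi1 i)
  have hs2 : Integrable (fun ω => ∑ i, f2 (X i ω)) μ :=
    integrable_finset_sum _ (fun i _ => hi2 i)
  have hGint : Integrable (fun ω => ∑ i, f1 (X i ω) + (1 - ∑ i, f2 (X i ω)) / τ) μ :=
    hs1.add (((integrable_const (1:ℝ)).sub hs2).div_const τ)
  -- pointwise bound
  have key1 : ∀ x : Fin n → ℝ,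
      ((Finset.univ.filter (fun i => x i ≤ τ)).card : ℝ) = ∑ i, f1 (x i) := by
    intro x
    have h : ∑ i, f1 (x i) = ∑ i ∈ Finset.univ.filter (fun i => x i ≤ τ), (1:ℝ) := by
      rw [Finset.sum_filter]
      apply Finset.sum_congr rfl
      intro i _
      simp [hf1def, Set.indicator_apply, Set.mem_Iic]
    rw [h, Finset.sum_const, nsmul_eq_mul, mul_one]
  have key2 : ∀ x : Fin n → ℝ,
      ∑ i ∈ Finset.univ.filter (fun i => x i ≤ τ), x i = ∑ i, f2 (x i) := by
    intro x
    rw [Finset.sum_filter]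
    apply Finset.sum_congr rfl
    intro i _
    simp [hf2def, Set.indicator_apply, Set.mem_Iic]
  have hptwise : ∀ ω, (knapMax (fun i => X i ω) 1 : ℝ)
      ≤ ∑ i, f1 (X i ω) + (1 - ∑ i, f2 (X i ω)) / τ := by
    intro ω
    have h := knap_pointwise τ hτ0 (fun i => X i ω)
    rw [key1, key2] at h
    have heq : τ * (∑ i, f1 (X i ω) + (1 - ∑ i, f2 (X i ω)) / τ)
        = τ * ∑ i, f1 (X i ω) + 1 - ∑ i, f2 (X i ω) := by
      field_simp
      ring
    exact le_of_mul_le_mul_left (by linarith) hτ0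
  -- integral of the bound
  have hG : ∫ ω, (∑ i, f1 (X i ω) + (1 - ∑ i, f2 (X i ω)) / τ) ∂μ = τ * H := by
    have hq : Integrable (fun ω => (1 - ∑ i : Fin n, f2 (X i ω)) / τ) μ :=
      ((integrable_const (1:ℝ)).sub hs2).div_const τ
    have hq2 : Integrable (fun ω => (1:ℝ) - ∑ i : Fin n, f2 (X i ω)) μ :=
      (integrable_const (1:ℝ)).sub hs2
    rw [integral_add hs1 hq, integral_div,
      integral_sub (integrable_const (1:ℝ)) hs2,
      integral_finset_sum _ (fun i _ => hi1 i), integral_finset_sum _ (fun i _ => hi2 i)]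
    simp only [E1, E2, integral_const, measure_univ, ENNReal.toReal_one, probReal_univ, smul_eq_mul, one_mul]
    have s1 : ∑ i : Fin n, τ / ((i.1:ℝ)+1) = τ * H := by
      rw [hHdef, Finset.mul_sum, ← Fin.sum_univ_eq_sum_range (fun j => τ * ((1:ℝ)/((j:ℝ)+1)))]
      apply Finset.sum_congr rfl
      intro i _
      rw [mul_one_div]
    have s2 : ∑ i : Fin n, τ^2 / (2*((i.1:ℝ)+1)) = 1 := by
      have h : ∑ i : Fin n, τ^2 / (2*((i.1:ℝ)+1)) = (τ^2/2) * H := by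
        rw [hHdef, Finset.mul_sum, ← Fin.sum_univ_eq_sum_range (fun j => (τ^2/2) * ((1:ℝ)/((j:ℝ)+1)))]
        apply Finset.sum_congr rfl
        intro i _
        rw [mul_one_div, div_div]
      rw [h, hτsq, show (2:ℝ)/H/2 = H⁻¹ by ring, inv_mul_cancel₀ (ne_of_gt hH0)]
    rw [s1, s2, sub_self, zero_div, add_zero]
  calc ∫ ω, (knapMax (fun i => X i ω) 1 : ℝ) ∂μ
      ≤ ∫ ω, (∑ i, f1 (X i ω) + (1 - ∑ i, f2 (X i ω)) / τ) ∂μ :=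
        integral_mono hki hGint hptwise
    _ = τ * H := hG
    _ = Real.sqrt (2*H) := by
        have h2H : (2:ℝ)*H = 2/H*H^2 := by
          rw [eq_comm, div_mul_eq_mul_div, div_eq_iff (ne_of_gt hH0)]
          ring
        rw [h2H, Real.sqrt_mul (div_nonneg (by norm_num) hH0.le), Real.sqrt_sq hH0.le, hτdef]
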